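/- Let F : Xₙ × Xₙ → Xₙ be associative and quasitrivial with signature (n₁,…,n_k) (the sizes of the equivalence classes of ∼_F listed in increasing ≺_F-order). Then the stabilizer of F under the conjugation action of the symmetric group Sₙ has cardinality n₁!·n₂!·⋯·n_k!, and the orbit of F has cardinality n!/(n₁!·⋯·n_k!). -/

import Mathlib

def Assoc {X : Type*} (F : X → X → X) : Prop :=
  ∀ x y z, F (F x y) z = F x (F y z)

def Quasitrivial {X : Type*} (F : X → X → X) : Prop :=
  ∀ x y, F x y = x ∨ F x y = y

/-- The weak ordering associated with `F`: `x ≾_F y` iff `F x y = y` or `F y x = y`. -/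
def wle {X : Type*} (F : X → X → X) (x y : X) : Prop :=
  F x y = y ∨ F y x = y

/-- Symmetric part of `≾_F`. -/
def simF {X : Type*} (F : X → X → X) (x y : X) : Prop :=
  wle F x y ∧ wle F y x

/-- Strict (asymmetric) part of `≾_F`. -/
def sltF {X : Type*} (F : X → X → X) (x y : X) : Prop :=
  wle F x y ∧ ¬ wle F y x

/-- The σ-conjugate of `F`. -/
def conjOp {X : Type*} (σ : Equiv.Perm X) (F : X → X → X) : X → X → X :=
  fun x y => σ (F (σ.symm x) (σ.symm y))

section basics
variable {X : Type*} (F : X → X → X)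

lemma F_self (hQ : Quasitrivial F) (x : X) : F x x = x := by
  rcases hQ x x with h | h <;> exact h

lemma simF_symm {x y : X} (h : simF F x y) : simF F y x := ⟨h.2, h.1⟩

lemma sltF_eq (hQ : Quasitrivial F) {x y : X} (h : sltF F x y) :
    F x y = y ∧ F y x = y := by
  obtain ⟨_, h2⟩ := h
  constructor
  · rcases hQ x y with h' | h'
    · exact absurd (Or.inr h') h2
    · exact h'
  · rcases hQ y x with h' | h'
    · exact h'
    · exact absurd (Or.inl h') h2

lemma pairProj (hQ : Quasitrivial F) {x y : X} (hxy : x ≠ y) (h : simF F x y) :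
    (F x y = x ∧ F y x = y) ∨ (F x y = y ∧ F y x = x) := by
  obtain ⟨h1, h2⟩ := h
  rcases hQ x y with hx | hx
  · left
    refine ⟨hx, ?_⟩
    rcases h1 with h | h
    · exact absurd (hx.symm.trans h) hxy
    · exact h
  · right
    refine ⟨hx, ?_⟩
    rcases h2 with h | h
    · exact h
    · exact absurd (hx.symm.trans h).symm hxy

lemma three (hA : Assoc F) (hQ : Quasitrivial F) {a b c : X}
    (hab : a ≠ b) (hbc : b ≠ c) (hac : a ≠ c)
    (sbc : simF F b c) (sac : simF F a c)
    (h1 : F a b = a) (h1' : F b a = b) : F b c = b ∧ F c b = c := by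
  rcases pairProj F hQ hbc sbc with h | ⟨h2, h2'⟩
  · exact h
  exfalso
  rcases pairProj F hQ hac sac with ⟨h3, h3'⟩ | ⟨h3, h3'⟩
  · have := hA b a c
    rw [h1', h3, h1', h2] at this
    exact hbc this.symm
  · have := hA a c b
    rw [h3, h2', h1] at this
    exact hab this.symm

/-- On a set where everything is `simF`-equivalent, `F` is one of the two projections. -/
lemma classProj (hA : Assoc F) (hQ : Quasitrivial F) {S : Finset X}
    (hsim : ∀ x ∈ S, ∀ y ∈ S, simF F x y) :
    (∀ x ∈ S, ∀ y ∈ S, F x y = x) ∨ (∀ x ∈ S, ∀ y ∈ S, F x y = y) := by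
  classical
  by_cases hex : ∃ a ∈ S, ∃ b ∈ S, a ≠ b ∧ F a b = a
  · left
    obtain ⟨a, ha, b, hb, hab, h1⟩ := hex
    have hP : F a b = a ∧ F b a = b := by
      rcases pairProj F hQ hab (hsim a ha b hb) with h | h
      · exact h
      · exact absurd (h.1.symm.trans h1).symm hab
    have step : ∀ u ∈ S, ∀ v ∈ S, ∀ w ∈ S, u ≠ v → v ≠ w → u ≠ w →
        F u v = u ∧ F v u = v → F v w = v ∧ F w v = w := by
      intro u hu v hv w hw huv hvw huw hP
      exact three F hA hQ huv hvw huw (hsim v hv w hw) (hsim u hu w hw) hP.1 hP.2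
    have key : ∀ x ∈ S, ∀ y ∈ S, x ≠ y → F x y = x ∧ F y x = y := by
      intro x hx y hy hxy
      by_cases hxa : x = a
      · subst hxa
        by_cases hyb : y = b
        · subst hyb; exact hP
        · -- from P b a get P a y via step (b, a, y)
          exact step b hb x hx y hy hab.symm hxy
            (fun h => hyb h.symm) ⟨hP.2, hP.1⟩
      by_cases hxb : x = b
      · subst hxb
        by_cases hya : y = a
        · subst hya; exact ⟨hP.2, hP.1⟩
        · exact step a ha x hx y hy hab hxy (fun h => hya h.symm) hP
      · -- x ∉ {a, b}
        have hPbx : F b x = b ∧ F x b = x :=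
          step a ha b hb x hx hab (fun h => hxb h.symm) (fun h => hxa h.symm) hP
        by_cases hyb : y = b
        · subst hyb; exact ⟨hPbx.2, hPbx.1⟩
        by_cases hya : y = a
        · subst hya
          exact step b hb x hx y hy (fun h => hxb h.symm) hxy hab.symm ⟨hPbx.1, hPbx.2⟩
        · exact step b hb x hx y hy (fun h => hxb h.symm) hxy (fun h => hyb h.symm) hPbx
    intro x hx y hy
    by_cases hxy : x = y
    · subst hxy; exact F_self F hQ x
    · exact (key x hx y hy hxy).1
  · right
    push_neg at hex
    intro x hx y hy
    by_cases hxy : x = y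
    · subst hxy; exact F_self F hQ x
    · rcases pairProj F hQ hxy (hsim x hx y hy) with h | h
      · exact absurd h.1 (hex x hx y hy hxy)
      · exact h.1

end basics
section partition
variable {n k : ℕ} {F : Fin n → Fin n → Fin n} {C : Fin k → Finset (Fin n)}

noncomputable def idxF (hcover : ∀ x : Fin n, ∃ i, x ∈ C i) : Fin n → Fin k :=
  fun x => (hcover x).choose

lemma mem_idxF (hcover : ∀ x : Fin n, ∃ i, x ∈ C i) (x : Fin n) :
    x ∈ C (idxF hcover x) := (hcover x).choose_spec

variable (hQ : Quasitrivial F)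
variable (hclass : ∀ i, ∀ x ∈ C i, ∀ y : Fin n, y ∈ C i ↔ simF F x y)
variable (horder : ∀ i j : Fin k, i < j → ∀ x ∈ C i, ∀ y ∈ C j, sltF F x y)

include hQ horder in
lemma class_disjoint {i j : Fin k} (hij : i ≠ j) {x : Fin n}
    (hxi : x ∈ C i) : x ∉ C j := by
  intro hxj
  have hw : wle F x x := Or.inl (F_self F hQ x)
  rcases hij.lt_or_gt with h | h
  · exact (horder i j h x hxi x hxj).2 hw
  · exact (horder j i h x hxj x hxi).2 hw

include hQ horder in
lemma idxF_unique (hcover : ∀ x : Fin n, ∃ i, x ∈ C i) {x : Fin n} {i : Fin k}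
    (hx : x ∈ C i) : idxF hcover x = i := by
  by_contra h
  exact class_disjoint hQ horder h (mem_idxF hcover x) hx

include hQ hclass horder in
lemma lt_of_sltF_mem {p q : Fin k} {u v : Fin n} (hu : u ∈ C p) (hv : v ∈ C q)
    (h : sltF F u v) : p < q := by
  rcases lt_trichotomy p q with hpq | hpq | hpq
  · exact hpq
  · subst hpq
    have : simF F u v := ((hclass p u hu v).mp hv)
    exact absurd this.2 h.2
  · exact absurd (horder q p hpq v hv u hu).1 h.2
variable (hA : Assoc F)
variable (hne : ∀ i, (C i).Nonempty)

include hQ hclass horder in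
lemma stab_of_idx (hcover : ∀ x : Fin n, ∃ i, x ∈ C i) (hA : Assoc F)
    (σ : Equiv.Perm (Fin n)) (h : ∀ x, idxF hcover (σ x) = idxF hcover x) :
    conjOp σ F = F := by
  funext x y
  show σ (F (σ.symm x) (σ.symm y)) = F x y
  set a := σ.symm x with ha
  set b := σ.symm y with hb
  have hx : x = σ a := (σ.apply_symm_apply x).symm
  have hy : y = σ b := (σ.apply_symm_apply y).symm
  rw [hx, hy]
  have hmem : ∀ z : Fin n, σ z ∈ C (idxF hcover z) := by
    intro z
    have := mem_idxF hcover (σ z)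
    rwa [h z] at this
  rcases lt_trichotomy (idxF hcover a) (idxF hcover b) with hlt | heq | hlt
  · have h1 := sltF_eq F hQ (horder _ _ hlt a (mem_idxF hcover a) b (mem_idxF hcover b))
    have h2 := sltF_eq F hQ (horder _ _ hlt (σ a) (hmem a) (σ b) (hmem b))
    rw [h1.1, h2.1]
  · have hsim : ∀ u ∈ C (idxF hcover a), ∀ v ∈ C (idxF hcover a), simF F u v := by
      intro u hu v hv
      exact (hclass _ u hu v).mp hv
    have hb' : b ∈ C (idxF hcover a) := heq ▸ mem_idxF hcover b
    have hsb : σ b ∈ C (idxF hcover a) := heq ▸ hmem b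
    rcases classProj F hA hQ hsim with hP | hP
    · rw [hP a (mem_idxF hcover a) b hb', hP (σ a) (hmem a) (σ b) hsb]
    · rw [hP a (mem_idxF hcover a) b hb', hP (σ a) (hmem a) (σ b) hsb]
  · have h1 := sltF_eq F hQ (horder _ _ hlt b (mem_idxF hcover b) a (mem_idxF hcover a))
    have h2 := sltF_eq F hQ (horder _ _ hlt (σ b) (hmem b) (σ a) (hmem a))
    rw [h1.2, h2.2]

include hQ hclass horder in
lemma idx_of_stab (hcover : ∀ x : Fin n, ∃ i, x ∈ C i) (hne : ∀ i, (C i).Nonempty)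
    (σ : Equiv.Perm (Fin n)) (h : conjOp σ F = F) :
    ∀ x, idxF hcover (σ x) = idxF hcover x := by
  have hc : ∀ a b, F (σ a) (σ b) = σ (F a b) := by
    intro a b
    have := congrFun (congrFun h (σ a)) (σ b)
    exact (by simpa [conjOp] using this : σ (F a b) = F (σ a) (σ b)).symm
  have hwle : ∀ a b, wle F (σ a) (σ b) ↔ wle F a b := by
    intro a b
    unfold wle
    rw [hc a b, hc b a, σ.injective.eq_iff, σ.injective.eq_iff]
  have hsim : ∀ a b, simF F a b → simF F (σ a) (σ b) := by
    intro a b hab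
    exact ⟨(hwle a b).mpr hab.1, (hwle b a).mpr hab.2⟩
  have hslt : ∀ a b, sltF F a b → sltF F (σ a) (σ b) := by
    intro a b hab
    exact ⟨(hwle a b).mpr hab.1, fun hw => hab.2 ((hwle b a).mp hw)⟩
  set rep : Fin k → Fin n := fun i => (hne i).choose with hrep
  have hrepmem : ∀ i, rep i ∈ C i := fun i => (hne i).choose_spec
  set g : Fin k → Fin k := fun i => idxF hcover (σ (rep i)) with hg
  have hgmono : StrictMono g := by
    intro i j hij
    have h1 : sltF F (σ (rep i)) (σ (rep j)) :=
      hslt _ _ (horder i j hij _ (hrepmem i) _ (hrepmem j))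
    exact lt_of_sltF_mem hQ hclass horder (mem_idxF hcover (σ (rep i)))
      (mem_idxF hcover (σ (rep j))) h1
  have hgid : ∀ i, g i = i := by
    intro i
    have : WellFoundedLT (Fin k) := inferInstance
    have : WellFoundedGT (Fin k) := inferInstance
    have h1 : i ≤ g i := hgmono.le_apply
    have h2 : g i ≤ i := hgmono.apply_le
    exact le_antisymm h2 h1
  intro x
  set i := idxF hcover x with hi
  have hxi : x ∈ C i := mem_idxF hcover x
  have hsxi : simF F (σ (rep i)) (σ x) :=
    hsim _ _ ((hclass i (rep i) (hrepmem i) x).mp hxi)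
  have hmem : σ (rep i) ∈ C i := by
    have := mem_idxF hcover (σ (rep i))
    rwa [show idxF hcover (σ (rep i)) = i from hgid i] at this
  have : σ x ∈ C i := (hclass i (σ (rep i)) hmem (σ x)).mpr hsxi
  exact idxF_unique hQ horder hcover this
end partition

section counting
variable {α β : Type*} [DecidableEq β]

/-- Glue a family of permutations of the fibers of `f` into a permutation of `α`. -/
def glueP (f : α → β) (π : ∀ b, Equiv.Perm {x // f x = b}) : Equiv.Perm α :=
  (Equiv.sigmaFiberEquiv f).permCongr (Equiv.sigmaCongrRight π)

lemma glueP_apply (f : α → β) (π : ∀ b, Equiv.Perm {x // f x = b}) (x : α) :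
    glueP f π x = (π (f x) ⟨x, rfl⟩).val := by
  simp [glueP, Equiv.permCongr_apply, Equiv.sigmaFiberEquiv, Equiv.sigmaCongrRight]

lemma glueP_fiber (f : α → β) (π : ∀ b, Equiv.Perm {x // f x = b}) (x : α) :
    f (glueP f π x) = f x := by
  rw [glueP_apply]
  exact (π (f x) ⟨x, rfl⟩).2

/-- Permutations preserving the fibers of `f` are the same as families of permutations
of the fibers. -/
def stabEquivPi (f : α → β) :
    {σ : Equiv.Perm α // ∀ x, f (σ x) = f x} ≃ ∀ b, Equiv.Perm {x // f x = b} where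
  toFun σ b := Equiv.Perm.subtypePerm σ.1 (fun x => by rw [σ.2 x])
  invFun π := ⟨glueP f π, glueP_fiber f π⟩
  left_inv σ := by
    apply Subtype.ext
    apply Equiv.ext
    intro x
    rw [glueP_apply]
    rfl
  right_inv π := by
    funext b
    apply Equiv.ext
    rintro ⟨x, hx⟩
    apply Subtype.ext
    subst hx
    simpa using glueP_apply f π x

lemma card_fiber_stab (f : α → β) [Fintype α] [Fintype β] [DecidableEq α] :
    Nat.card {σ : Equiv.Perm α // ∀ x, f (σ x) = f x}
      = ∏ b, (Fintype.card {x // f x = b}).factorial := by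
  rw [Nat.card_congr (stabEquivPi f), Nat.card_pi]
  refine Finset.prod_congr rfl fun b _ => ?_
  rw [Nat.card_eq_fintype_card, Fintype.card_perm]

end counting

section group
variable {X : Type*} (F : X → X → X)

lemma conjOp_one : conjOp (1 : Equiv.Perm X) F = F := by
  funext x y
  simp [conjOp]
  rfl

lemma conjOp_mul (σ τ : Equiv.Perm X) : conjOp (σ * τ) F = conjOp σ (conjOp τ F) := by
  funext x y
  simp [conjOp, Equiv.Perm.mul_apply, mul_inv_rev, ← Equiv.Perm.inv_def]

end group

theorem stmt_8 {n : ℕ} (F : Fin n → Fin n → Fin n)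
    (hA : Assoc F) (hQ : Quasitrivial F)
    (k : ℕ) (C : Fin k → Finset (Fin n))
    -- the `C i` are the equivalence classes of `∼_F`, listed in increasing `≺_F`-order
    (hne : ∀ i, (C i).Nonempty)
    (hcover : ∀ x : Fin n, ∃ i, x ∈ C i)
    (hclass : ∀ i, ∀ x ∈ C i, ∀ y : Fin n, y ∈ C i ↔ simF F x y)
    (horder : ∀ i j : Fin k, i < j → ∀ x ∈ C i, ∀ y ∈ C j, sltF F x y) :
    Nat.card {σ : Equiv.Perm (Fin n) // conjOp σ F = F} = ∏ i, Nat.factorial (C i).card ∧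
      Nat.card {G : Fin n → Fin n → Fin n // ∃ σ : Equiv.Perm (Fin n), G = conjOp σ F}
        = Nat.factorial n / ∏ i, Nat.factorial (C i).card := by
  classical
  have hiff : ∀ σ : Equiv.Perm (Fin n),
      conjOp σ F = F ↔ ∀ x, idxF hcover (σ x) = idxF hcover x := fun σ =>
    ⟨idx_of_stab hQ hclass horder hcover hne σ, stab_of_idx hQ hclass horder hcover hA σ⟩
  have hfib : ∀ i, Fintype.card {x // idxF hcover x = i} = (C i).card := by
    intro i
    rw [Fintype.card_congr (Equiv.subtypeEquivRight (fun x =>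
      ⟨fun h => h ▸ mem_idxF hcover x, fun h => idxF_unique hQ horder hcover h⟩))]
    exact Fintype.card_coe (C i)
  have part1 : Nat.card {σ : Equiv.Perm (Fin n) // conjOp σ F = F}
      = ∏ i, Nat.factorial (C i).card := by
    rw [Nat.card_congr (Equiv.subtypeEquivRight hiff), card_fiber_stab (idxF hcover)]
    exact Finset.prod_congr rfl fun i _ => by rw [hfib i]
  refine ⟨part1, ?_⟩
  -- the stabilizer as a subgroup
  set H : Subgroup (Equiv.Perm (Fin n)) :=
    { carrier := {σ | conjOp σ F = F}
      one_mem' := conjOp_one F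
      mul_mem' := by
        intro a b ha hb
        show conjOp (a * b) F = F
        rw [conjOp_mul, hb, ha]
      inv_mem' := by
        intro a ha
        show conjOp a⁻¹ F = F
        have : conjOp a F = F := ha
        calc conjOp a⁻¹ F = conjOp a⁻¹ (conjOp a F) := by rw [this]
          _ = conjOp (a⁻¹ * a) F := (conjOp_mul F _ _).symm
          _ = F := by rw [inv_mul_cancel, conjOp_one] } with hHdef
  have key : ∀ σ τ : Equiv.Perm (Fin n), conjOp σ F = conjOp τ F ↔ σ⁻¹ * τ ∈ H := by
    intro σ τ
    constructor
    · intro h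
      show conjOp (σ⁻¹ * τ) F = F
      calc conjOp (σ⁻¹ * τ) F = conjOp σ⁻¹ (conjOp τ F) := conjOp_mul F _ _
        _ = conjOp σ⁻¹ (conjOp σ F) := by rw [h]
        _ = conjOp (σ⁻¹ * σ) F := (conjOp_mul F _ _).symm
        _ = F := by rw [inv_mul_cancel, conjOp_one]
    · intro h
      have h' : conjOp (σ⁻¹ * τ) F = F := h
      calc conjOp σ F = conjOp σ (conjOp (σ⁻¹ * τ) F) := by rw [h']
        _ = conjOp (σ * (σ⁻¹ * τ)) F := (conjOp_mul F _ _).symm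
        _ = conjOp τ F := by rw [mul_inv_cancel_left]
  set e : (Equiv.Perm (Fin n) ⧸ H) → {G : Fin n → Fin n → Fin n // ∃ σ, G = conjOp σ F} :=
    fun q => Quotient.liftOn' q
      (fun σ => (⟨conjOp σ F, σ, rfl⟩ : {G : Fin n → Fin n → Fin n // ∃ σ, G = conjOp σ F}))
      (fun σ τ hrel => Subtype.ext ((key σ τ).mpr (QuotientGroup.leftRel_apply.mp hrel)))
    with hedef
  have hbij : Function.Bijective e := by
    constructor
    · intro q1 q2 h
      induction q1 using Quotient.inductionOn' with | h σ =>
      induction q2 using Quotient.inductionOn' with | h τ =>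
      apply Quotient.sound'
      rw [QuotientGroup.leftRel_apply]
      exact (key σ τ).mp (congrArg Subtype.val h)
    · rintro ⟨G, σ, rfl⟩
      exact ⟨Quotient.mk'' σ, rfl⟩
  have horb : Nat.card {G : Fin n → Fin n → Fin n // ∃ σ, G = conjOp σ F}
      = Nat.card (Equiv.Perm (Fin n) ⧸ H) :=
    (Nat.card_congr (Equiv.ofBijective e hbij)).symm
  have hHcard : Nat.card H = ∏ i, Nat.factorial (C i).card := by
    rw [← part1]
    exact Nat.card_congr (Equiv.subtypeEquivRight fun σ => Iff.rfl)
  have hperm : Nat.card (Equiv.Perm (Fin n)) = n.factorial := by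
    rw [Nat.card_eq_fintype_card, Fintype.card_perm, Fintype.card_fin]
  have hSpos : 0 < ∏ i, Nat.factorial (C i).card :=
    Finset.prod_pos fun i _ => Nat.factorial_pos _
  have hmain : n.factorial
      = Nat.card (Equiv.Perm (Fin n) ⧸ H) * ∏ i, Nat.factorial (C i).card := by
    rw [← hperm, Subgroup.card_eq_card_quotient_mul_card_subgroup H, hHcard]
  rw [horb]
  exact (Nat.div_eq_of_eq_mul_left hSpos hmain).symm
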